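/- Let L be a semiexact reflection on a triangulated category T. Then the following assertions are equivalent: (i) L is exact (the class of L-local objects is colocalizing); (ii) the class of L-local objects is closed under Σ; (iii) ΣLX ≅ LΣX for every object X; (iv) the canonical morphism Σν_X : ΣLX → LΣX (characterized by Σν_X ∘ Σl_X = l_{ΣX}) is an isomorphism for every X; (v) L preserves all distinguished triangles, i.e., for every distinguished triangle X →u Y →v Z →w ΣX, the triangle LX →Lu LY →Lv LZ → ΣLX (with third map Σν_X⁻¹ ∘ Lw) is distinguished. -/

import Mathlib

open CategoryTheory Category Limits Pretriangulated

universe v u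

namespace Paper

section General

variable {T : Type u} [Category.{v} T]

/-- A full subcategory (given by its class of objects) is closed under retracts. -/
def ClosedUnderRetracts (S : Set T) : Prop :=
  ∀ ⦃A B : T⦄, A ∈ S → (∃ (i : B ⟶ A) (r : A ⟶ B), i ≫ r = 𝟙 B) → B ∈ S

/-- A full subcategory is weakly reflective: every object admits a weak reflection into it. -/
def WeaklyReflective (S : Set T) : Prop :=
  ∀ X : T, ∃ (X' : T) (l : X ⟶ X'), X' ∈ S ∧
    ∀ ⦃Y : T⦄, Y ∈ S → ∀ f : X ⟶ Y, ∃ g : X' ⟶ Y, l ≫ g = f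

/-- A full subcategory is weakly coreflective. -/
def WeaklyCoreflective (S : Set T) : Prop :=
  ∀ X : T, ∃ (X' : T) (c : X' ⟶ X), X' ∈ S ∧
    ∀ ⦃Y : T⦄, Y ∈ S → ∀ f : Y ⟶ X, ∃ g : Y ⟶ X', g ≫ c = f

/-- A full subcategory is reflective: the inclusion has a left adjoint. -/
def ReflectiveSet (S : Set T) : Prop :=
  (ObjectProperty.ι (fun X => X ∈ S)).IsRightAdjoint

/-- A full subcategory is coreflective: the inclusion has a right adjoint. -/
def CoreflectiveSet (S : Set T) : Prop :=
  (ObjectProperty.ι (fun X => X ∈ S)).IsLeftAdjoint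

end General

/-- The data of an endofunctor together with a natural transformation from the identity
(a candidate reflection with its unit). -/
structure ReflectionData (T : Type u) [Category.{v} T] where
  L : T ⥤ T
  unit : 𝟭 T ⟶ L

/-- The data of an endofunctor together with a natural transformation to the identity
(a candidate coreflection with its counit). -/
structure CoreflectionData (T : Type u) [Category.{v} T] where
  C : T ⥤ T
  counit : C ⟶ 𝟭 T

section ReflData

variable {T : Type u} [Category.{v} T]

/-- The `L`-local objects: the essential image of `L`. -/
def ReflectionData.localObjects (R : ReflectionData T) : Set T := R.L.essImage

/-- `(L, l)` is a reflection: every morphism to an `L`-local object factors uniquely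
through the unit. -/
def ReflectionData.IsReflection (R : ReflectionData T) : Prop :=
  ∀ ⦃X W : T⦄, W ∈ R.localObjects → ∀ f : X ⟶ W,
    ∃! g : R.L.obj X ⟶ W, R.unit.app X ≫ g = f

/-- The `C`-colocal objects: the essential image of `C`. -/
def CoreflectionData.colocalObjects (Q : CoreflectionData T) : Set T := Q.C.essImage

/-- `(C, c)` is a coreflection: every morphism from a `C`-colocal object factors uniquely
through the counit. -/
def CoreflectionData.IsCoreflection (Q : CoreflectionData T) : Prop :=
  ∀ ⦃X W : T⦄, W ∈ Q.colocalObjects → ∀ f : W ⟶ X,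
    ∃! g : W ⟶ Q.C.obj X, g ≫ Q.counit.app X = f

end ReflData

section Triangulated

variable {T : Type u} [Category.{v} T] [HasZeroObject T] [Preadditive T] [HasShift T ℤ]
  [∀ n : ℤ, (shiftFunctor T n).Additive] [Pretriangulated T]

/-- Closed under fibres: the first vertex of a distinguished triangle whose second and third
vertices lie in `S` lies in `S`. -/
def ClosedUnderFibres (S : Set T) : Prop :=
  ∀ ⦃X Y Z : T⦄ (u : X ⟶ Y) (v : Y ⟶ Z) (w : Z ⟶ X⟦(1:ℤ)⟧),
    (Triangle.mk u v w ∈ distTriang T) → Y ∈ S → Z ∈ S → X ∈ S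

/-- Closed under cofibres. -/
def ClosedUnderCofibres (S : Set T) : Prop :=
  ∀ ⦃X Y Z : T⦄ (u : X ⟶ Y) (v : Y ⟶ Z) (w : Z ⟶ X⟦(1:ℤ)⟧),
    (Triangle.mk u v w ∈ distTriang T) → X ∈ S → Y ∈ S → Z ∈ S

/-- Closed under extensions. -/
def ClosedUnderExtensions (S : Set T) : Prop :=
  ∀ ⦃X Y Z : T⦄ (u : X ⟶ Y) (v : Y ⟶ Z) (w : Z ⟶ X⟦(1:ℤ)⟧),
    (Triangle.mk u v w ∈ distTriang T) → X ∈ S → Z ∈ S → Y ∈ S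

/-- `^⊥D`: objects `X` with `T(X, ΣᵏD) = 0` for all `D ∈ D` and all integers `k`. -/
def leftOrth (D : Set T) : Set T :=
  {X | ∀ ⦃E : T⦄, E ∈ D → ∀ k : ℤ, ∀ f : X ⟶ E⟦k⟧, f = 0}

/-- `D^⊥`: objects `Y` with `T(ΣᵏD, Y) = 0` for all `D ∈ D` and all integers `k`. -/
def rightOrth (D : Set T) : Set T :=
  {Y | ∀ ⦃E : T⦄, E ∈ D → ∀ k : ℤ, ∀ f : E⟦k⟧ ⟶ Y, f = 0}

/-- `⊾D`: objects `X` with `T(X, ΣᵏD) = 0` for all `D ∈ D` and all `k ≤ 0`. -/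
def leftSemiOrth (D : Set T) : Set T :=
  {X | ∀ ⦃E : T⦄, E ∈ D → ∀ k : ℤ, k ≤ 0 → ∀ f : X ⟶ E⟦k⟧, f = 0}

/-- `D⊿`: objects `Y` with `T(ΣᵏD, Y) = 0` for all `D ∈ D` and all `k ≥ 0`. -/
def rightSemiOrth (D : Set T) : Set T :=
  {Y | ∀ ⦃E : T⦄, E ∈ D → ∀ k : ℤ, 0 ≤ k → ∀ f : E⟦k⟧ ⟶ Y, f = 0}

section WithLimits

variable [HasProducts.{v} T] [HasCoproducts.{v} T]

/-- Closed under all (small) products. -/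
def ClosedUnderProducts (S : Set T) : Prop :=
  ∀ ⦃ι : Type v⦄ (f : ι → T), (∀ i, f i ∈ S) → (∏ᶜ f) ∈ S

/-- Closed under all (small) coproducts. -/
def ClosedUnderCoproducts (S : Set T) : Prop :=
  ∀ ⦃ι : Type v⦄ (f : ι → T), (∀ i, f i ∈ S) → (∐ f) ∈ S

/-- Semilocalizing: closed under coproducts, cofibres and extensions. -/
def IsSemilocalizing (S : Set T) : Prop :=
  ClosedUnderCoproducts S ∧ ClosedUnderCofibres S ∧ ClosedUnderExtensions S

/-- Semicolocalizing: closed under products, fibres and extensions. -/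
def IsSemicolocalizing (S : Set T) : Prop :=
  ClosedUnderProducts S ∧ ClosedUnderFibres S ∧ ClosedUnderExtensions S

/-- Localizing: closed under coproducts, fibres, cofibres and extensions. -/
def IsLocalizing (S : Set T) : Prop :=
  ClosedUnderCoproducts S ∧ ClosedUnderFibres S ∧ ClosedUnderCofibres S ∧
    ClosedUnderExtensions S

/-- Colocalizing: closed under products, fibres, cofibres and extensions. -/
def IsColocalizing (S : Set T) : Prop :=
  ClosedUnderProducts S ∧ ClosedUnderFibres S ∧ ClosedUnderCofibres S ∧
    ClosedUnderExtensions S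

/-- The smallest semilocalizing subcategory containing `D`. -/
def semiloc (D : Set T) : Set T := ⋂₀ {S : Set T | IsSemilocalizing S ∧ D ⊆ S}

/-- The smallest semicolocalizing subcategory containing `D`. -/
def semicoloc (D : Set T) : Set T := ⋂₀ {S : Set T | IsSemicolocalizing S ∧ D ⊆ S}

/-- The smallest localizing subcategory containing `D`. -/
def loc (D : Set T) : Set T := ⋂₀ {S : Set T | IsLocalizing S ∧ D ⊆ S}

/-- The smallest colocalizing subcategory containing `D`. -/
def coloc (D : Set T) : Set T := ⋂₀ {S : Set T | IsColocalizing S ∧ D ⊆ S}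

end WithLimits

end Triangulated


set_option linter.unusedSectionVars false

open ZeroObject

section Statement1Aux

variable {T : Type u} [Category.{v} T] [HasZeroObject T] [Preadditive T] [HasShift T ℤ]
  [∀ n : ℤ, (shiftFunctor T n).Additive] [Pretriangulated T]
  [HasProducts.{v} T] [HasCoproducts.{v} T]

variable (R : ReflectionData T)

lemma aux_ofIso {X Y : T} (e : X ≅ Y) (hX : X ∈ R.localObjects) : Y ∈ R.localObjects :=
  Functor.essImage.ofIso e hX

lemma aux_obj_local (X : T) : R.L.obj X ∈ R.localObjects :=
  Functor.obj_mem_essImage _ X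

lemma aux_unit_cancel (hrefl : R.IsReflection) {X W : T} (hW : W ∈ R.localObjects)
    {g₁ g₂ : R.L.obj X ⟶ W} (h : R.unit.app X ≫ g₁ = R.unit.app X ≫ g₂) : g₁ = g₂ := by
  obtain ⟨g, -, hu⟩ := hrefl hW (R.unit.app X ≫ g₂)
  rw [hu g₁ h, hu g₂ rfl]

lemma aux_nat {A B : T} (f : A ⟶ B) :
    f ≫ R.unit.app B = R.unit.app A ≫ R.L.map f := by
  simpa using R.unit.naturality f

lemma aux_zero_local (hsemi : IsSemicolocalizing R.localObjects) :
    (0 : T) ∈ R.localObjects := by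
  have h := hsemi.1 (ι := PEmpty.{v+1}) (fun i => i.elim) (fun i => i.elim)
  refine aux_ofIso R ?_ h
  refine ⟨0, 0, ?_, ?_⟩
  · apply Pi.hom_ext
    intro i; exact i.elim
  · apply (isZero_zero T).eq_of_src

lemma aux_shift_neg_local (hsemi : IsSemicolocalizing R.localObjects)
    {X : T} (hX : X ∈ R.localObjects) : X⟦(-1 : ℤ)⟧ ∈ R.localObjects := by
  have hd := rot_of_distTriang _ (contractible_distinguished (X⟦(-1 : ℤ)⟧))
  refine hsemi.2.1 _ _ _ hd (aux_zero_local R hsemi) ?_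
  exact aux_ofIso R ((shiftFunctorCompIsoId T (-1 : ℤ) (1 : ℤ) (by simp)).app X).symm hX

/-- The map `Σl_X` has the universal property of a weak reflection: any map `X⟦1⟧ ⟶ W`
with `W` local factors uniquely through `(l_X)⟦1⟧`. -/
lemma aux_shift_fac (hrefl : R.IsReflection) (hsemi : IsSemicolocalizing R.localObjects)
    {X W : T} (hW : W ∈ R.localObjects) (f : X⟦(1 : ℤ)⟧ ⟶ W) :
    ∃! g : (R.L.obj X)⟦(1 : ℤ)⟧ ⟶ W, (R.unit.app X)⟦(1 : ℤ)⟧' ≫ g = f := by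
  have adj := (shiftEquiv T (1 : ℤ)).toAdjunction
  have hW' : W⟦(-1 : ℤ)⟧ ∈ R.localObjects := aux_shift_neg_local R hsemi hW
  obtain ⟨g, hg, hgu⟩ := hrefl hW' (adj.homEquiv X W f : X ⟶ W⟦(-1 : ℤ)⟧)
  refine ⟨(adj.homEquiv (R.L.obj X) W).symm g, ?_, ?_⟩
  · have h := adj.homEquiv_naturality_left_symm (X' := X) (R.unit.app X) g
    erw [hg, Equiv.symm_apply_apply] at h
    exact h.symm
  · intro h hh
    have hh' : (shiftEquiv T (1 : ℤ)).functor.map (R.unit.app X) ≫ h = f := hh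
    have hnat := adj.homEquiv_naturality_left (X' := X) (R.unit.app X) h
    rw [hh'] at hnat
    have hg' : adj.homEquiv (R.L.obj X) W h = g := hgu _ hnat.symm
    erw [← hg', Equiv.symm_apply_apply]

lemma aux_shift_cancel (hrefl : R.IsReflection) (hsemi : IsSemicolocalizing R.localObjects)
    {X W : T} (hW : W ∈ R.localObjects)
    {g₁ g₂ : (R.L.obj X)⟦(1 : ℤ)⟧ ⟶ W}
    (h : (R.unit.app X)⟦(1 : ℤ)⟧' ≫ g₁ = (R.unit.app X)⟦(1 : ℤ)⟧' ≫ g₂) : g₁ = g₂ := by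
  obtain ⟨g, -, hu⟩ := aux_shift_fac R hrefl hsemi hW ((R.unit.app X)⟦(1 : ℤ)⟧' ≫ g₂)
  rw [hu g₁ h, hu g₂ rfl]

/-- The canonical comparison morphism `ν_X : (LX)⟦1⟧ ⟶ L(X⟦1⟧)` exists. -/
lemma aux_nu_exists (hrefl : R.IsReflection) (hsemi : IsSemicolocalizing R.localObjects)
    (X : T) :
    ∃ ν : (R.L.obj X)⟦(1 : ℤ)⟧ ⟶ R.L.obj (X⟦(1 : ℤ)⟧),
      (R.unit.app X)⟦(1 : ℤ)⟧' ≫ ν = R.unit.app (X⟦(1 : ℤ)⟧) :=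
  (aux_shift_fac R hrefl hsemi (aux_obj_local R _)
    (R.unit.app (X⟦(1 : ℤ)⟧) : X⟦(1 : ℤ)⟧ ⟶ R.L.obj (X⟦(1 : ℤ)⟧))).exists

/-- If locals are closed under shift, any comparison morphism has a two-sided inverse. -/
lemma aux_nu_inv (hrefl : R.IsReflection) (hsemi : IsSemicolocalizing R.localObjects)
    (h2 : ∀ ⦃X : T⦄, X ∈ R.localObjects → X⟦(1 : ℤ)⟧ ∈ R.localObjects)
    {X : T} {ν : (R.L.obj X)⟦(1 : ℤ)⟧ ⟶ R.L.obj (X⟦(1 : ℤ)⟧)}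
    (hν : (R.unit.app X)⟦(1 : ℤ)⟧' ≫ ν = R.unit.app (X⟦(1 : ℤ)⟧)) :
    ∃ ν' : R.L.obj (X⟦(1 : ℤ)⟧) ⟶ (R.L.obj X)⟦(1 : ℤ)⟧,
      ν ≫ ν' = 𝟙 _ ∧ ν' ≫ ν = 𝟙 _ := by
  have hSLX : (R.L.obj X)⟦(1 : ℤ)⟧ ∈ R.localObjects := h2 (aux_obj_local R X)
  obtain ⟨ν', hν', -⟩ := hrefl hSLX
    ((R.unit.app X)⟦(1 : ℤ)⟧' : X⟦(1 : ℤ)⟧ ⟶ (R.L.obj X)⟦(1 : ℤ)⟧)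
  refine ⟨ν', ?_, ?_⟩
  · apply aux_shift_cancel R hrefl hsemi hSLX
    rw [← assoc, hν, hν', comp_id]
  · apply aux_unit_cancel R hrefl (aux_obj_local R _)
    rw [← assoc, hν', hν, comp_id]

end Statement1Aux

section Statement1Main

variable {T : Type u} [Category.{v} T] [HasZeroObject T] [Preadditive T] [HasShift T ℤ]
  [∀ n : ℤ, (shiftFunctor T n).Additive] [Pretriangulated T]
  [HasProducts.{v} T] [HasCoproducts.{v} T]

variable (R : ReflectionData T)

/-- If locals are closed under shift, `L` preserves distinguished triangles. -/
lemma aux_five (hrefl : R.IsReflection) (hsemi : IsSemicolocalizing R.localObjects)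
    (h2 : ∀ ⦃X : T⦄, X ∈ R.localObjects → X⟦(1 : ℤ)⟧ ∈ R.localObjects)
    {X Y Z : T} (u : X ⟶ Y) (v : Y ⟶ Z) (w : Z ⟶ X⟦(1 : ℤ)⟧)
    (hT : Triangle.mk u v w ∈ distTriang T) :
    ∃ (ν : (R.L.obj X)⟦(1:ℤ)⟧ ⟶ R.L.obj (X⟦(1:ℤ)⟧))
      (ν' : R.L.obj (X⟦(1:ℤ)⟧) ⟶ (R.L.obj X)⟦(1:ℤ)⟧),
      (R.unit.app X)⟦(1:ℤ)⟧' ≫ ν = R.unit.app (X⟦(1:ℤ)⟧) ∧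
      ν ≫ ν' = 𝟙 _ ∧ ν' ≫ ν = 𝟙 _ ∧
      Triangle.mk (R.L.map u) (R.L.map v) (R.L.map w ≫ ν') ∈ distTriang T := by
  obtain ⟨ν, hν⟩ := aux_nu_exists R hrefl hsemi X
  obtain ⟨ν', hc1, hc2⟩ := aux_nu_inv R hrefl hsemi h2 hν
  obtain ⟨W, v', w', hΔ'⟩ := distinguished_cocone_triangle (R.L.map u)
  obtain ⟨z, hz1₀, hz2₀⟩ := complete_distinguished_triangle_morphism
    (Triangle.mk u v w) (Triangle.mk (R.L.map u) v' w') hT hΔ'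
    (R.unit.app X) (R.unit.app Y) (aux_nat R u)
  obtain ⟨z, hz1, hz2⟩ :
      ∃ z : Z ⟶ W, v ≫ z = R.unit.app Y ≫ v' ∧
        w ≫ (R.unit.app X)⟦(1 : ℤ)⟧' = z ≫ w' := ⟨z, hz1₀, hz2₀⟩
  clear hz1₀ hz2₀
  have hSLX : (R.L.obj X)⟦(1 : ℤ)⟧ ∈ R.localObjects := h2 (aux_obj_local R X)
  have hW : W ∈ R.localObjects :=
    hsemi.2.2 _ _ _ (rot_of_distTriang _ hΔ') (aux_obj_local R Y) hSLX
  have hw31 : w' ≫ (R.L.map u)⟦(1 : ℤ)⟧' = 0 := comp_distTriang_mor_zero₃₁ _ hΔ'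
  have huv : u ≫ v = 0 := comp_distTriang_mor_zero₁₂ _ hT
  -- `z : Z ⟶ W` is a weak reflection of `Z`
  have zfac : ∀ ⦃V : T⦄, V ∈ R.localObjects → ∀ f : Z ⟶ V, ∃! g : W ⟶ V, z ≫ g = f := by
    intro V hV f
    have hz0 : ∀ g : W ⟶ V, z ≫ g = 0 → g = 0 := by
      intro g hg
      have h1 : v' ≫ g = 0 := by
        apply aux_unit_cancel R hrefl hV (g₂ := 0)
        rw [comp_zero, ← assoc, ← hz1, assoc, hg, comp_zero]
      obtain ⟨h, hh'⟩ : ∃ h : (R.L.obj X)⟦(1 : ℤ)⟧ ⟶ V, g = w' ≫ h :=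
        Triangle.yoneda_exact₃ _ hΔ' g h1
      have h2' : w ≫ ((R.unit.app X)⟦(1 : ℤ)⟧' ≫ h) = 0 := by
        rw [← assoc, hz2, assoc, ← hh', hg]
      obtain ⟨k, hk'⟩ : ∃ k : Y⟦(1 : ℤ)⟧ ⟶ V,
          (R.unit.app X)⟦(1 : ℤ)⟧' ≫ h = (-(u⟦(1 : ℤ)⟧')) ≫ k :=
        Triangle.yoneda_exact₃ _ (rot_of_distTriang _ hT) _ h2'
      obtain ⟨k2, hk2, -⟩ := aux_shift_fac R hrefl hsemi hV (k : Y⟦(1 : ℤ)⟧ ⟶ V)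
      have heq : (R.unit.app X)⟦(1 : ℤ)⟧' ≫ h
          = (R.unit.app X)⟦(1 : ℤ)⟧' ≫ (-((R.L.map u)⟦(1 : ℤ)⟧' ≫ k2)) := by
        rw [hk', ← hk2]
        simp only [Preadditive.neg_comp, Preadditive.comp_neg, neg_inj, ← assoc,
          ← Functor.map_comp, aux_nat R u]
      have hh2 : h = -((R.L.map u)⟦(1 : ℤ)⟧' ≫ k2) :=
        aux_shift_cancel R hrefl hsemi hV heq
      rw [hh', hh2, Preadditive.comp_neg, ← assoc, hw31, zero_comp, neg_zero]
    obtain ⟨g1, hg1, -⟩ := hrefl hV (v ≫ f)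
    have hLug1 : R.L.map u ≫ g1 = 0 := by
      apply aux_unit_cancel R hrefl hV (g₂ := 0)
      rw [comp_zero, ← assoc, ← aux_nat R u, assoc, hg1, ← assoc, huv, zero_comp]
    obtain ⟨g2, hg2'⟩ : ∃ g2 : W ⟶ V, g1 = v' ≫ g2 :=
      Triangle.yoneda_exact₂ _ hΔ' g1 hLug1
    have hd : v ≫ (f - z ≫ g2) = 0 := by
      rw [Preadditive.comp_sub, ← assoc, hz1, assoc, ← hg2', hg1, sub_self]
    obtain ⟨e, he₂⟩ : ∃ e : X⟦(1 : ℤ)⟧ ⟶ V, f - z ≫ g2 = w ≫ e :=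
      Triangle.yoneda_exact₃ _ hT _ hd
    obtain ⟨e', he', -⟩ := aux_shift_fac R hrefl hsemi hV (e : X⟦(1 : ℤ)⟧ ⟶ V)
    refine ⟨g2 + w' ≫ e', ?_, ?_⟩
    · show z ≫ (g2 + w' ≫ e') = f
      rw [Preadditive.comp_add, ← assoc, ← hz2, assoc, he', ← he₂]
      abel
    · intro g hg
      have hg' : z ≫ g = f := hg
      have h0 := hz0 (g - (g2 + w' ≫ e')) (by
        rw [Preadditive.comp_sub, hg', Preadditive.comp_add, ← assoc, ← hz2, assoc,
          he', ← he₂]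
        abel)
      rw [sub_eq_zero] at h0
      exact h0
  obtain ⟨φ, hφ, -⟩ := hrefl hW z
  obtain ⟨ψ, hψ, -⟩ := zfac (aux_obj_local R Z) (R.unit.app Z)
  have hφψ : φ ≫ ψ = 𝟙 _ := by
    apply aux_unit_cancel R hrefl (aux_obj_local R Z)
    rw [comp_id, ← assoc, hφ, hψ]
  have hψφ : ψ ≫ φ = 𝟙 _ :=
    (zfac hW z).unique (show z ≫ (ψ ≫ φ) = z by rw [← assoc, hψ, hφ])
      (show z ≫ 𝟙 W = z by rw [comp_id])
  refine ⟨ν, ν', hν, hc1, hc2, ?_⟩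
  refine isomorphic_distinguished _ hΔ' _ ?_
  refine Triangle.isoMk _ _ (Iso.refl _) (Iso.refl _) ⟨φ, ψ, hφψ, hψφ⟩ ?_ ?_ ?_
  · dsimp [Triangle.mk]
    rw [comp_id, id_comp]
  · dsimp [Triangle.mk]
    rw [id_comp]
    apply aux_unit_cancel R hrefl hW
    rw [← assoc, ← aux_nat R v, assoc, hφ, hz1]
  · dsimp [Triangle.mk]
    rw [CategoryTheory.Functor.map_id, comp_id]
    apply aux_unit_cancel R hrefl hSLX
    rw [← assoc (R.unit.app Z) φ w', hφ, ← hz2, ← assoc (R.unit.app Z) (R.L.map w) ν',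
      ← aux_nat R w, assoc, ← hν]
    simp only [assoc]
    rw [hc1, comp_id]
end Statement1Main


section Statements

variable {T : Type u} [Category.{v} T] [HasZeroObject T] [Preadditive T] [HasShift T ℤ]
  [∀ n : ℤ, (shiftFunctor T n).Additive] [Pretriangulated T]
  [HasProducts.{v} T] [HasCoproducts.{v} T]

/-- For a semiexact reflection `L` on a triangulated category, the following are
equivalent: (i) `L` is exact; (ii) the `L`-local objects are closed under `Σ`;
(iii) `ΣLX ≅ LΣX` for all `X`; (iv) the canonical morphism `Σν_X : ΣLX ⟶ LΣX` (characterized by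
`Σν_X ∘ Σl_X = l_{ΣX}`) is an isomorphism for all `X`; (v) `L` preserves all distinguished
triangles (with third map `Σν_X⁻¹ ∘ Lw`). -/
theorem statement1 (R : ReflectionData T) (hrefl : R.IsReflection)
    (hsemi : IsSemicolocalizing R.localObjects) :
    List.TFAE [
      IsColocalizing R.localObjects,
      ∀ ⦃X : T⦄, X ∈ R.localObjects → X⟦(1:ℤ)⟧ ∈ R.localObjects,
      ∀ X : T, Nonempty ((R.L.obj X)⟦(1:ℤ)⟧ ≅ R.L.obj (X⟦(1:ℤ)⟧)),
      ∀ (X : T) (ν : (R.L.obj X)⟦(1:ℤ)⟧ ⟶ R.L.obj (X⟦(1:ℤ)⟧)),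
        (R.unit.app X)⟦(1:ℤ)⟧' ≫ ν = R.unit.app (X⟦(1:ℤ)⟧) → IsIso ν,
      ∀ ⦃X Y Z : T⦄ (u : X ⟶ Y) (v : Y ⟶ Z) (w : Z ⟶ X⟦(1:ℤ)⟧),
        (Triangle.mk u v w ∈ distTriang T) →
        ∃ (ν : (R.L.obj X)⟦(1:ℤ)⟧ ⟶ R.L.obj (X⟦(1:ℤ)⟧))
          (ν' : R.L.obj (X⟦(1:ℤ)⟧) ⟶ (R.L.obj X)⟦(1:ℤ)⟧),
          (R.unit.app X)⟦(1:ℤ)⟧' ≫ ν = R.unit.app (X⟦(1:ℤ)⟧) ∧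
          ν ≫ ν' = 𝟙 _ ∧ ν' ≫ ν = 𝟙 _ ∧
          Triangle.mk (R.L.map u) (R.L.map v) (R.L.map w ≫ ν') ∈ distTriang T
    ] := by
  tfae_have 1 → 2 := by
    intro h1 X hX
    exact h1.2.2.1 _ _ _ (rot_of_distTriang _ (contractible_distinguished X)) hX
      (aux_zero_local R hsemi)
  tfae_have 2 → 1 := by
    intro h2
    refine ⟨hsemi.1, hsemi.2.1, ?_, hsemi.2.2⟩
    intro A B C u v w hd hA hB
    exact hsemi.2.2 _ _ _ (rot_of_distTriang _ hd) hB (h2 hA)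
  tfae_have 3 → 2 := by
    intro h3 X hX
    obtain ⟨Y, ⟨e⟩⟩ := hX
    obtain ⟨i⟩ := h3 Y
    exact ⟨Y⟦(1:ℤ)⟧, ⟨i.symm ≪≫ (shiftFunctor T (1:ℤ)).mapIso e⟩⟩
  tfae_have 4 → 3 := by
    intro h4 X
    obtain ⟨ν, hν⟩ := aux_nu_exists R hrefl hsemi X
    have := h4 X ν hν
    exact ⟨asIso ν⟩
  tfae_have 2 → 4 := by
    intro h2 X ν hν
    obtain ⟨ν', hc1, hc2⟩ := aux_nu_inv R hrefl hsemi h2 hν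
    exact ⟨ν', hc1, hc2⟩
  tfae_have 5 → 3 := by
    intro h5 X
    obtain ⟨ν, ν', -, hc1, hc2, -⟩ :=
      h5 (𝟙 X) (0 : X ⟶ (0 : T)) 0 (contractible_distinguished X)
    exact ⟨⟨ν, ν', hc1, hc2⟩⟩
  tfae_have 4 → 5 := by
    intro h4 X Y Z u v w hd
    exact aux_five R hrefl hsemi (tfae_3_to_2 (tfae_4_to_3 h4)) u v w hd
  tfae_finish

end Statements

end Paper
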